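/- Let E, F be Banach lattices, 𝒮 a set of positive operators E → F, and 𝒯 a collectively L-weakly compact set of positive operators E → F dominating 𝒮 (for each S ∈ 𝒮 there is T ∈ 𝒯 with 0 ≤ S ≤ T). Then 𝒮 is collectively L-weakly compact. -/

import Mathlib

open Filter Topology Metric Set

/-- A pairwise disjoint sequence in a Banach lattice. -/
def DisjSeq {E : Type*} [NormedAddCommGroup E] [Lattice E] [HasSolidNorm E] [IsOrderedAddMonoid E] (x : ℕ → E) : Prop :=
  ∀ n m, n ≠ m → |x n| ⊓ |x m| = 0

/-- The solid hull of a set. -/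
def solidHull {E : Type*} [NormedAddCommGroup E] [Lattice E] [HasSolidNorm E] [IsOrderedAddMonoid E] (A : Set E) : Set E :=
  {x | ∃ a ∈ A, |x| ≤ |a|}

/-- A set is L-weakly compact if it is norm bounded and every disjoint
sequence in its solid hull is norm null. -/
def IsLwcSet {E : Type*} [NormedAddCommGroup E] [Lattice E] [HasSolidNorm E] [IsOrderedAddMonoid E] (A : Set E) : Prop :=
  Bornology.IsBounded A ∧
    ∀ x : ℕ → E, (∀ n, x n ∈ solidHull A) → DisjSeq x →
      Tendsto (fun n => ‖x n‖) atTop (𝓝 0)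

/-- The domination property for collectively L-weakly compact sets: if a set `𝒮` of
positive operators is dominated by a collectively L-weakly compact set `𝒯` of positive
operators, then `𝒮` is collectively L-weakly compact. -/
theorem collectivelyLwc_of_dominated {E F : Type*}
    [NormedAddCommGroup E] [Lattice E] [HasSolidNorm E] [IsOrderedAddMonoid E] [NormedSpace ℝ E] [CompleteSpace E]
    [NormedAddCommGroup F] [Lattice F] [HasSolidNorm F] [IsOrderedAddMonoid F] [NormedSpace ℝ F] [CompleteSpace F]
    (𝒮 𝒯 : Set (E →L[ℝ] F))
    (hSpos : ∀ S ∈ 𝒮, ∀ x : E, 0 ≤ x → 0 ≤ S x)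
    (hTpos : ∀ T ∈ 𝒯, ∀ x : E, 0 ≤ x → 0 ≤ T x)
    (hdom : ∀ S ∈ 𝒮, ∃ T ∈ 𝒯, ∀ x : E, 0 ≤ x → S x ≤ T x)
    (hT : IsLwcSet (⋃ T ∈ 𝒯, T '' closedBall (0 : E) 1)) :
    IsLwcSet (⋃ S ∈ 𝒮, S '' closedBall (0 : E) 1) := by
  obtain ⟨hb, hd⟩ := hT
  -- key: each element of the 𝒮-union is dominated pointwise by an element of the 𝒯-union
  have key : ∀ z ∈ ⋃ S ∈ 𝒮, S '' closedBall (0 : E) 1,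
      ∃ w ∈ ⋃ T ∈ 𝒯, T '' closedBall (0 : E) 1, |z| ≤ |w| := by
    intro z hz
    simp only [Set.mem_iUnion, Set.mem_image] at hz
    obtain ⟨S, hS, y, hy, rfl⟩ := hz
    obtain ⟨T, hTmem, hST⟩ := hdom S hS
    have hSmono : ∀ a b : E, a ≤ b → S a ≤ S b := by
      intro a b hab
      have := hSpos S hS (b - a) (sub_nonneg.2 hab)
      simpa [map_sub, sub_nonneg] using this
    have h1 : |S y| ≤ S |y| := by
      refine abs_le'.2 ⟨hSmono _ _ (le_abs_self y), ?_⟩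
      have := hSmono (-y) |y| (neg_le_abs y)
      rw [map_neg] at this
      exact this
    have h2 : S |y| ≤ T |y| := hST _ (abs_nonneg y)
    have h3 : (0 : F) ≤ T |y| := hTpos T hTmem _ (abs_nonneg y)
    have habs : |y| ∈ closedBall (0 : E) 1 := by
      rw [mem_closedBall_zero_iff] at hy ⊢
      simpa [norm_abs_eq_norm] using hy
    refine ⟨T |y|, ?_, ?_⟩
    · simp only [Set.mem_iUnion, Set.mem_image]
      exact ⟨T, hTmem, |y|, habs, rfl⟩
    · rw [abs_of_nonneg h3]
      exact h1.trans h2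
  have hsub : solidHull (⋃ S ∈ 𝒮, S '' closedBall (0 : E) 1) ⊆
      solidHull (⋃ T ∈ 𝒯, T '' closedBall (0 : E) 1) := by
    rintro x ⟨a, ha, hxa⟩
    obtain ⟨w, hw, haw⟩ := key a ha
    exact ⟨w, hw, hxa.trans haw⟩
  constructor
  · rw [isBounded_iff_forall_norm_le] at hb ⊢
    obtain ⟨C, hC⟩ := hb
    refine ⟨C, fun z hz => ?_⟩
    obtain ⟨w, hw, hzw⟩ := key z hz
    exact (HasSolidNorm.solid hzw).trans (hC w hw)
  · intro x hx hdisj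
    exact hd x (fun n => hsub (hx n)) hdisj
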